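/- Let K be a field of characteristic zero, k a positive even integer, and M = K(ℤ, 2n) with 2n > k, with Sullivan model (∧x, 0). Let M(T) = (∧x ⊗ ∧s^{k-1}x ⊗ ∧sx ⊗ ∧ss^{k-1}x, 0) be the model of map(S^{k-1}×S^1, M) and M(S^k) = (∧x ⊗ ∧s^kx, 0) the model of map(S^k, M). Then the dual of the S^k-brane coproduct δ^∨: M(S^k) → M(T) is given by δ^∨(α) = s^{k-1}x · ι(α), where ι is the algebra map with ι(x) = x and ι(s^kx) = ss^{k-1}x. -/

import Mathlib

noncomputable section
namespace Brane

/-- The monomial in a generator family indexed by a list. -/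
def mon {A G : Type} [Ring A] (gen : G → A) (l : List G) : A := (l.map gen).prod

/-- The degree-`m` component: the `K`-span of monomials of total degree `m`. -/
def grading (K : Type) {A G : Type} [Field K] [Ring A] [Algebra K A]
    (gen : G → A) (dg : G → ℤ) (m : ℤ) : Submodule K A :=
  Submodule.span K {a : A | ∃ l : List G, (l.map dg).sum = m ∧ a = mon gen l}

/-- Graded commutativity on generators (Koszul signs). -/
def GradedComm (K : Type) {A G : Type} [Field K] [Ring A] [Algebra K A]
    (gen : G → A) (dg : G → ℤ) : Prop :=
  ∀ i j, gen i * gen j = ((-1 : K) ^ (dg i * dg j)) • (gen j * gen i)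

/-- `A` is the free graded-commutative algebra on the generators: the reduced sorted
monomials (odd generators appearing at most once) form a `K`-basis. -/
def IsFreeGCAOn (K : Type) {A G : Type} [Field K] [Ring A] [Algebra K A] [LinearOrder G]
    (gen : G → A) (dg : G → ℤ) : Prop :=
  ∃ b : Module.Basis {l : List G // l.Pairwise (· ≤ ·) ∧ ∀ g, Odd (dg g) → l.count g ≤ 1} K A,
    ∀ l, b l = mon gen l.1

/-- A graded `K`-linear derivation of degree `r` (Koszul sign rule). -/
def IsGradedDer (K : Type) {A G : Type} [Field K] [Ring A] [Algebra K A]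
    (gen : G → A) (dg : G → ℤ) (r : ℤ) (D : A →ₗ[K] A) : Prop :=
  (∀ (i : ℤ) (a : A), a ∈ grading K gen dg i → D a ∈ grading K gen dg (i + r)) ∧
  (∀ (i : ℤ) (a b : A), a ∈ grading K gen dg i →
    D (a * b) = D a * b + ((-1 : K) ^ (r * i)) • (a * D b))

/-- A differential: a graded derivation of degree `1` squaring to zero. -/
def IsDifferential (K : Type) {A G : Type} [Field K] [Ring A] [Algebra K A]
    (gen : G → A) (dg : G → ℤ) (D : A →ₗ[K] A) : Prop :=
  IsGradedDer K gen dg 1 D ∧ ∀ a, D (D a) = 0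

/-- The Sullivan (nilpotence) condition. -/
def SullivanCond (K : Type) {A G : Type} [Field K] [Ring A] [Algebra K A]
    (gen : G → A) (D : A →ₗ[K] A) : Prop :=
  ∃ w : G → ℕ, ∀ g, D (gen g) ∈ Algebra.adjoin K (gen '' {g' | w g' < w g})

/-- Decomposable elements (span of monomials of length at least two). -/
def decomposables (K : Type) {A G : Type} [Field K] [Ring A] [Algebra K A]
    (gen : G → A) : Submodule K A :=
  Submodule.span K {a : A | ∃ l : List G, 2 ≤ l.length ∧ a = mon gen l}


/-- Let `K` be a field of characteristic zero, `k` a positive even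
integer, and `M = K(ℤ, 2n)` with `2n > k`, with Sullivan model `(∧x, 0)`.  Let
`M(T) = ∧x ⊗ ∧s^{k-1}x ⊗ ∧sx ⊗ ∧ss^{k-1}x` (zero differential) be the model of
`map(S^{k-1}×S^1, M)` and `M(S^k) = ∧x ⊗ ∧s^kx` the model of `map(S^k, M)`.
Then the dual of the `S^k`-brane coproduct, i.e. the composition
`M(S^k) --incl*--> ∧x ⊗_{M(S^{k-1})} M(T) --φ--> M(D^k) ⊗_{M(S^{k-1})} M(T)
--γ⊗id--> M(T)` (with the section `φ` and the shriek representative `γ`, `γ(1) =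
s^{k-1}x`, `γ((s^kx)^l) = 0` for `l ≥ 1`), is given by `δ^∨(α) = s^{k-1}x · ι(α)`,
where `ι` is the algebra map with `ι(x) = x` and `ι(s^kx) = ss^{k-1}x`. -/
theorem brane_coproduct_dual_evenEM
    (K Sk T B1 B2 : Type) [Field K] [CharZero K]
    [Ring Sk] [Algebra K Sk] [Ring T] [Algebra K T] [Ring B1] [Algebra K B1]
    [Ring B2] [Algebra K B2]
    [LinearOrder (Fin 2)] [LinearOrder (Fin 2 ⊕ Fin 2)]
    [LinearOrder (Fin 2 ⊕ Fin 1)] [LinearOrder (Fin 3 ⊕ Fin 2)]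
    (n k : ℕ) (hk : 0 < k) (hkeven : Even k) (hnk : k < 2 * n)
    -- M(S^k) = ∧x ⊗ ∧s^kx  (generators x, s^kx)
    (sk : Fin 2 → Sk) (hSkfree : IsFreeGCAOn K sk ![(2 * n : ℤ), 2 * n - k])
    (hSkcomm : GradedComm K sk ![(2 * n : ℤ), 2 * n - k])
    -- M(T) = ∧x ⊗ ∧ss^{k-1}x ⊗ ∧s^{k-1}x ⊗ ∧sx
    -- (even generators inl 0 = x, inl 1 = ss^{k-1}x; odd inr 0 = s^{k-1}x, inr 1 = sx)
    (t : Fin 2 ⊕ Fin 2 → T)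
    (hTfree : IsFreeGCAOn K t (Sum.elim ![(2 * n : ℤ), 2 * n - k] ![2 * n - k + 1, 2 * n - 1]))
    (hTcomm : GradedComm K t (Sum.elim ![(2 * n : ℤ), 2 * n - k] ![2 * n - k + 1, 2 * n - 1]))
    -- B1 = ∧x ⊗_{M(S^{k-1})} M(T)  (generators x, ss^{k-1}x; sx)
    (b1 : Fin 2 ⊕ Fin 1 → B1)
    (hB1free : IsFreeGCAOn K b1 (Sum.elim ![(2 * n : ℤ), 2 * n - k] ![2 * n - 1]))
    (hB1comm : GradedComm K b1 (Sum.elim ![(2 * n : ℤ), 2 * n - k] ![2 * n - 1]))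
    -- B2 = M(D^k) ⊗_{M(S^{k-1})} M(T)
    -- (even generators inl 0 = x, inl 1 = s^kx, inl 2 = ss^{k-1}x;
    --  odd inr 0 = s^{k-1}x, inr 1 = sx)
    (b2 : Fin 3 ⊕ Fin 2 → B2)
    (hB2free : IsFreeGCAOn K b2
      (Sum.elim ![(2 * n : ℤ), 2 * n - k, 2 * n - k] ![2 * n - k + 1, 2 * n - 1]))
    (hB2comm : GradedComm K b2
      (Sum.elim ![(2 * n : ℤ), 2 * n - k, 2 * n - k] ![2 * n - k + 1, 2 * n - 1]))
    -- incl* : M(S^k) → B1,  x ↦ x, s^kx ↦ ss^{k-1}x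
    (incl : Sk →ₐ[K] B1) (hincl1 : incl (sk 0) = b1 (Sum.inl 0))
    (hincl2 : incl (sk 1) = b1 (Sum.inl 1))
    -- the section φ : B1 → B2 of ε̃ ⊗ id
    (φ : B1 →ₐ[K] B2) (hφ1 : φ (b1 (Sum.inl 0)) = b2 (Sum.inl 0))
    (hφ2 : φ (b1 (Sum.inl 1)) = b2 (Sum.inl 2)) (hφ3 : φ (b1 (Sum.inr 0)) = b2 (Sum.inr 1))
    -- the embedding of M(T) in B2
    (jT : T →ₐ[K] B2) (hjT1 : jT (t (Sum.inl 0)) = b2 (Sum.inl 0))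
    (hjT2 : jT (t (Sum.inl 1)) = b2 (Sum.inl 2))
    (hjT3 : jT (t (Sum.inr 0)) = b2 (Sum.inr 0)) (hjT4 : jT (t (Sum.inr 1)) = b2 (Sum.inr 1))
    -- γ ⊗ id : B2 → M(T): M(T)-linear, γ(1) = s^{k-1}x, γ((s^kx)^l) = 0 for l ≥ 1
    (g : B2 →ₗ[K] T)
    (hglin : ∀ (u : T) (z : B2), g (jT u * z) = u * g z)
    (hg1 : g 1 = t (Sum.inr 0))
    (hg2 : ∀ z : B2, g (b2 (Sum.inl 1) * z) = 0)
    -- the algebra map ι : M(S^k) → M(T), x ↦ x, s^kx ↦ ss^{k-1}x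
    (ι : Sk →ₐ[K] T) (hι1 : ι (sk 0) = t (Sum.inl 0)) (hι2 : ι (sk 1) = t (Sum.inl 1)) :
    ∀ α : Sk, g (φ (incl α)) = t (Sum.inr 0) * ι α := by
  -- φ ∘ incl on generators lands in the image of jT
  have hincl' : ∀ i : Fin 2, φ (incl (sk i)) = jT (t (Sum.inl i)) := by
    intro i
    fin_cases i
    · show φ (incl (sk 0)) = jT (t (Sum.inl 0)); rw [hincl1, hφ1, hjT1]
    · show φ (incl (sk 1)) = jT (t (Sum.inl 1)); rw [hincl2, hφ2, hjT2]
  have hι' : ∀ i : Fin 2, ι (sk i) = t (Sum.inl i) := by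
    intro i; fin_cases i
    · exact hι1
    · exact hι2
  -- even generators commute with t (inr 0)
  have hcomm : ∀ i : Fin 2,
      t (Sum.inl i) * t (Sum.inr 0) = t (Sum.inr 0) * t (Sum.inl i) := by
    intro i
    have h := hTcomm (Sum.inl i) (Sum.inr 0)
    have heven : Even ((Sum.elim ![(2 * n : ℤ), 2 * n - k]
        ![2 * n - k + 1, 2 * n - 1]) (Sum.inl i)) := by
      fin_cases i
      · show Even ((2 * n : ℤ))
        exact even_two_mul (n : ℤ)
      · show Even ((2 * n : ℤ) - k)
        exact (even_two_mul (n : ℤ)).sub (by exact_mod_cast hkeven)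
    rw [h, Even.neg_one_zpow (heven.mul_right _), one_smul]
  have hcommmon : ∀ l : List (Fin 2),
      mon t (l.map Sum.inl) * t (Sum.inr 0) = t (Sum.inr 0) * mon t (l.map Sum.inl) := by
    intro l
    induction l with
    | nil => simp [mon]
    | cons i l ih =>
      simp only [mon, List.map_cons, List.prod_cons] at ih ⊢
      rw [mul_assoc, ih, ← mul_assoc, hcomm i, mul_assoc]
  have hmap : ∀ l : List (Fin 2),
      φ (incl (mon sk l)) = jT (mon t (l.map Sum.inl)) := by
    intro l
    induction l with
    | nil => simp [mon]
    | cons i l ih =>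
      simp only [mon, List.map_cons, List.prod_cons, map_mul] at ih ⊢
      rw [ih, hincl' i]
  have hιmon : ∀ l : List (Fin 2), ι (mon sk l) = mon t (l.map Sum.inl) := by
    intro l
    induction l with
    | nil => simp [mon]
    | cons i l ih =>
      simp only [mon, List.map_cons, List.prod_cons, map_mul] at ih ⊢
      rw [ih, hι' i]
  have key : ∀ l : List (Fin 2),
      g (φ (incl (mon sk l))) = t (Sum.inr 0) * ι (mon sk l) := by
    intro l
    rw [hmap l, hιmon l, ← mul_one (jT (mon t (l.map Sum.inl))), hglin, hg1,
      hcommmon l]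
  -- extend from monomials to all of Sk via the basis
  obtain ⟨b, hb⟩ := hSkfree
  intro α
  have hL : (g.comp (φ.toLinearMap.comp incl.toLinearMap)) =
      ((LinearMap.mulLeft K (t (Sum.inr 0))).comp ι.toLinearMap) := by
    apply b.ext
    intro l
    simp only [LinearMap.coe_comp, Function.comp_apply, AlgHom.toLinearMap_apply,
      LinearMap.mulLeft_apply, hb l]
    exact key l.1
  simpa using LinearMap.congr_fun hL α

end Brane
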